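/- Let f(u) = (u^2-1)^2, θ(z) = tanh(√2 z), and let λ₁ be the smallest eigenvalue of the Neumann problem -q'' + f''(θ)q = λq on (-1/ε, 1/ε) with q'(±1/ε) = 0. Then λ₁ ≤ C e^{-c/ε} for constants c, C > 0 independent of small ε; in particular λ₁ → 0 as ε → 0. (Upper bound obtained by using the normalized test function θ'/‖θ'‖_{L²(-1/ε,1/ε)}.) -/

import Mathlib

open Real Set Filter MeasureTheory

/-- The first Neumann eigenvalue of `-q'' + f''(θ) q = λ q` on `(-1/ε, 1/ε)`,
characterized variationally as the infimum of the Rayleigh quotient over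
`L²`-normalized `H¹` functions, with `f(u) = (u²-1)²` (so `f''(u) = 12u² - 4`)
and `θ(z) = tanh(√2 z)`. -/
noncomputable def lambda1 (ε : ℝ) : ℝ :=
  sInf {R : ℝ | ∃ q : ℝ → ℝ, ContDiff ℝ 1 q ∧
    (∫ z in Icc (-(1 / ε)) (1 / ε), (q z) ^ 2) = 1 ∧
    R = ∫ z in Icc (-(1 / ε)) (1 / ε),
      ((deriv q z) ^ 2 + (12 * (Real.tanh (Real.sqrt 2 * z)) ^ 2 - 4) * (q z) ^ 2)}

noncomputable section
namespace Stmt18Aux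

def s : ℝ := Real.sqrt 2
lemma s_pos : 0 < s := Real.sqrt_pos.mpr (by norm_num)
lemma s_sq : s ^ 2 = 2 := Real.sq_sqrt (by norm_num)

def ch (z : ℝ) : ℝ := Real.cosh (s * z)
def sh (z : ℝ) : ℝ := Real.sinh (s * z)
def V (z : ℝ) : ℝ := 12 * Real.tanh (Real.sqrt 2 * z) ^ 2 - 4
def p (z : ℝ) : ℝ := 1 / ch z ^ 2
def p' (z : ℝ) : ℝ := -2 * s * sh z / ch z ^ 3
def p'' (z : ℝ) : ℝ := -4 / ch z ^ 2 + 12 * sh z ^ 2 / ch z ^ 4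

lemma ch_pos (z : ℝ) : 0 < ch z := Real.cosh_pos _
lemma ch_ne (z : ℝ) : ch z ≠ 0 := (ch_pos z).ne'
lemma pyth (z : ℝ) : ch z ^ 2 - sh z ^ 2 = 1 := Real.cosh_sq_sub_sinh_sq _

lemma v_eq (z : ℝ) : V z = 8 - 12 / ch z ^ 2 := by
  have hc := ch_ne z
  have hp := pyth z
  unfold V
  rw [Real.tanh_eq_sinh_div_cosh]
  show 12 * (sh z / ch z) ^ 2 - 4 = _
  field_simp
  nlinarith [hp]

lemma continuous_V : Continuous V := by
  have hV : V = fun z => 12 * (Real.sinh (Real.sqrt 2 * z) / Real.cosh (Real.sqrt 2 * z)) ^ 2 - 4 := by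
    funext z; unfold V; rw [Real.tanh_eq_sinh_div_cosh]
  rw [hV]
  exact (continuous_const.mul (((Real.continuous_sinh.comp
    (continuous_const.mul continuous_id)).div (Real.continuous_cosh.comp
    (continuous_const.mul continuous_id)) fun z => (Real.cosh_pos _).ne').pow 2)).sub
    continuous_const

lemma hasDerivAt_ch (z : ℝ) : HasDerivAt ch (s * sh z) z := by
  have h := (Real.hasDerivAt_cosh (s * z)).comp z ((hasDerivAt_id z).const_mul s)
  exact h.congr_deriv (by unfold sh; ring)

lemma hasDerivAt_sh (z : ℝ) : HasDerivAt sh (s * ch z) z := by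
  have h := (Real.hasDerivAt_sinh (s * z)).comp z ((hasDerivAt_id z).const_mul s)
  exact h.congr_deriv (by unfold ch; ring)

lemma hasDerivAt_p (z : ℝ) : HasDerivAt p (p' z) z := by
  have h := (hasDerivAt_const z (1:ℝ)).div ((hasDerivAt_ch z).pow 2) (pow_ne_zero 2 (ch_ne z))
  refine h.congr_deriv ?_; symm
  unfold p'
  have hc := ch_ne z
  field_simp
  simp only [Pi.pow_apply]
  ring

lemma hasDerivAt_p' (z : ℝ) : HasDerivAt p' (p'' z) z := by
  have h := ((hasDerivAt_sh z).const_mul (-2 * s)).div ((hasDerivAt_ch z).pow 3)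
    (pow_ne_zero 3 (ch_ne z))
  refine h.congr_deriv ?_; symm
  unfold p''
  have hc := ch_ne z
  have hs := s_sq
  field_simp
  simp only [Pi.pow_apply]
  linear_combination (2 * ch z ^ 2 - 6 * sh z ^ 2) * ch z ^ 6 * hs

lemma p''_eq (z : ℝ) : p'' z = V z * p z := by
  rw [v_eq]
  unfold p'' p
  have hc := ch_ne z
  have hp := pyth z
  field_simp
  linear_combination (-12) * hp

def A (L : ℝ) : ℝ := 1 / (2 * ch L ^ 4)
def w (L z : ℝ) : ℝ := p z + A L * Real.cosh (2 * s * z)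
def w1 (L z : ℝ) : ℝ := p' z + 2 * s * A L * Real.sinh (2 * s * z)
def w2 (L z : ℝ) : ℝ := p'' z + 8 * A L * Real.cosh (2 * s * z)

lemma A_pos (L : ℝ) : 0 < A L := by
  have := ch_pos L; unfold A; positivity

lemma p_pos (z : ℝ) : 0 < p z := by
  have := ch_pos z; unfold p; positivity

lemma w_pos (L z : ℝ) : 0 < w L z := by
  have := A_pos L
  have := Real.cosh_pos (2 * s * z)
  have := p_pos z
  unfold w; nlinarith

lemma w_ne (L z : ℝ) : w L z ≠ 0 := (w_pos L z).ne'

lemma p_le_w (L z : ℝ) : p z ≤ w L z := by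
  have := A_pos L
  have := Real.cosh_pos (2 * s * z)
  unfold w; nlinarith

lemma hasDerivAt_cosh2 (z : ℝ) :
    HasDerivAt (fun y => Real.cosh (2 * s * y)) (2 * s * Real.sinh (2 * s * z)) z := by
  have h := ((hasDerivAt_id z).const_mul (2 * s)).cosh
  simpa [mul_comm] using h

lemma hasDerivAt_sinh2 (z : ℝ) :
    HasDerivAt (fun y => Real.sinh (2 * s * y)) (2 * s * Real.cosh (2 * s * z)) z := by
  have h := ((hasDerivAt_id z).const_mul (2 * s)).sinh
  simpa [mul_comm] using h

lemma hasDerivAt_w (L z : ℝ) : HasDerivAt (w L) (w1 L z) z := by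
  have h := (hasDerivAt_p z).add ((hasDerivAt_cosh2 z).const_mul (A L))
  refine h.congr_deriv ?_; symm
  unfold w1; ring

lemma hasDerivAt_w1 (L z : ℝ) : HasDerivAt (w1 L) (w2 L z) z := by
  have h := (hasDerivAt_p' z).add ((hasDerivAt_sinh2 z).const_mul (2 * s * A L))
  refine h.congr_deriv ?_; symm
  unfold w2
  have hs := s_sq
  linear_combination (-4 * A L * Real.cosh (2 * s * z)) * hs

lemma w1_L (L : ℝ) : w1 L L = 0 := by
  unfold w1 p' A
  rw [show 2 * s * L = 2 * (s * L) by ring, Real.sinh_two_mul]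
  show -2 * s * sh L / ch L ^ 3 + 2 * s * (1 / (2 * ch L ^ 4)) * (2 * sh L * ch L) = 0
  have hc := ch_ne L
  field_simp
  ring

lemma w1_negL (L : ℝ) : w1 L (-L) = 0 := by
  unfold w1 p' A
  rw [show 2 * s * -L = -(2 * (s * L)) by ring, Real.sinh_neg, Real.sinh_two_mul]
  show -2 * s * sh (-L) / ch (-L) ^ 3 + _ = 0
  have h1 : sh (-L) = - sh L := by unfold sh; rw [show s * -L = -(s*L) by ring, Real.sinh_neg]
  have h2 : ch (-L) = ch L := by unfold ch; rw [show s * -L = -(s*L) by ring, Real.cosh_neg]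
  rw [h1, h2]
  have hc := ch_ne L
  unfold sh ch
  field_simp
  ring

lemma continuous_ch : Continuous ch := Real.continuous_cosh.comp (continuous_const.mul continuous_id)
lemma continuous_sh : Continuous sh := Real.continuous_sinh.comp (continuous_const.mul continuous_id)
lemma continuous_p : Continuous p :=
  continuous_const.div (continuous_ch.pow 2) fun z => pow_ne_zero 2 (ch_ne z)
lemma continuous_p' : Continuous p' :=
  (continuous_const.mul continuous_sh).div (continuous_ch.pow 3) fun z => pow_ne_zero 3 (ch_ne z)
lemma continuous_p'' : Continuous p'' := by
  apply Continuous.add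
  · exact continuous_const.div (continuous_ch.pow 2) fun z => pow_ne_zero 2 (ch_ne z)
  · exact (continuous_const.mul (continuous_sh.pow 2)).div (continuous_ch.pow 4)
      fun z => pow_ne_zero 4 (ch_ne z)
lemma continuous_cosh2 : Continuous fun z => Real.cosh (2 * s * z) :=
  Real.continuous_cosh.comp (continuous_const.mul continuous_id)
lemma continuous_sinh2 : Continuous fun z => Real.sinh (2 * s * z) :=
  Real.continuous_sinh.comp (continuous_const.mul continuous_id)
lemma continuous_w (L : ℝ) : Continuous (w L) :=
  continuous_p.add (continuous_const.mul continuous_cosh2)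
lemma continuous_w1 (L : ℝ) : Continuous (w1 L) :=
  continuous_p'.add (continuous_const.mul continuous_sinh2)
lemma continuous_w2 (L : ℝ) : Continuous (w2 L) :=
  continuous_p''.add (continuous_const.mul continuous_cosh2)

lemma VwSubW2 (L z : ℝ) : V z * w L z - w2 L z = -(12 * A L * Real.cosh (2 * s * z)) * p z := by
  unfold w w2
  rw [p''_eq z, v_eq z]
  unfold p
  have hc := ch_ne z
  field_simp
  ring

lemma sqbound (L : ℝ) (hL : 0 < L) :
    12 * A L * Real.cosh (2 * s * L) ≤ 48 * Real.exp (-(2 * s * L)) := by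
  have hc := ch_pos L
  have hE : Real.exp (s * L) ≤ 2 * ch L := by
    unfold ch; rw [Real.cosh_eq]
    have := (Real.exp_pos (-(s * L))).le
    linarith
  have h2 : Real.cosh (2 * s * L) ≤ 2 * ch L ^ 2 := by
    rw [show 2 * s * L = 2 * (s * L) by ring, Real.cosh_two_mul]
    have hp := pyth L
    unfold ch sh at *
    nlinarith
  calc 12 * A L * Real.cosh (2 * s * L)
      = 6 * Real.cosh (2 * s * L) / ch L ^ 4 := by unfold A; field_simp; ring
    _ ≤ 12 * ch L ^ 2 / ch L ^ 4 := by
        apply div_le_div_of_nonneg_right (by nlinarith) (by positivity)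
    _ = 12 / ch L ^ 2 := by field_simp
    _ ≤ 48 / (Real.exp (s * L)) ^ 2 := by
        rw [div_le_div_iff₀ (by positivity) (by positivity)]
        nlinarith [Real.exp_pos (s * L)]
    _ = 48 * Real.exp (-(2 * s * L)) := by
        rw [show -(2 * s * L) = -(s * L + s * L) by ring, Real.exp_neg, Real.exp_add]
        rw [pow_two]
        ring

lemma G_bound (L : ℝ) (hL : 0 < L) (z : ℝ) (hz : z ∈ Icc (-L) L) :
    -(48 * Real.exp (-(2 * s * L))) ≤ V z - w2 L z / w L z := by
  have hw := w_pos L z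
  have e : V z - w2 L z / w L z = (V z * w L z - w2 L z) / w L z := by
    field_simp
  rw [e, VwSubW2 L z, neg_mul, neg_div, neg_le_neg_iff]
  have hXpos : (0:ℝ) ≤ 12 * A L * Real.cosh (2 * s * z) := by
    have := A_pos L
    have := Real.cosh_pos (2 * s * z)
    positivity
  have h1 : 12 * A L * Real.cosh (2 * s * z) * p z / w L z
      ≤ 12 * A L * Real.cosh (2 * s * z) := by
    rw [div_le_iff₀ hw]
    exact mul_le_mul_of_nonneg_left (p_le_w L z) hXpos
  have h2 : Real.cosh (2 * s * z) ≤ Real.cosh (2 * s * L) := by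
    rw [Real.cosh_le_cosh]
    have hzabs : |z| ≤ L := abs_le.mpr ⟨hz.1, hz.2⟩
    calc |2 * s * z| = |2 * s| * |z| := abs_mul _ _
      _ ≤ |2 * s| * L := mul_le_mul_of_nonneg_left hzabs (abs_nonneg _)
      _ = |2 * s| * |L| := by rw [abs_of_pos hL]
      _ = |2 * s * L| := (abs_mul _ _).symm
  have h3 : 12 * A L * Real.cosh (2 * s * z) ≤ 12 * A L * Real.cosh (2 * s * L) := by
    apply mul_le_mul_of_nonneg_left h2
    have := A_pos L
    positivity
  exact h1.trans (h3.trans (sqbound L hL))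

lemma icc_int (L : ℝ) (hL : 0 ≤ L) (f : ℝ → ℝ) :
    (∫ z in Icc (-L) L, f z) = ∫ z in (-L)..L, f z := by
  rw [intervalIntegral.integral_of_le (by linarith), integral_Icc_eq_integral_Ioc]

lemma integral_lower (L : ℝ) (hL : 0 < L) (q : ℝ → ℝ) (hq : ContDiff ℝ 1 q)
    (hnorm : (∫ z in Icc (-L) L, q z ^ 2) = 1) :
    -(48 * Real.exp (-(2 * s * L))) ≤ ∫ z in Icc (-L) L, ((deriv q z) ^ 2 + V z * q z ^ 2) := by
  have hle : -L ≤ L := by linarith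
  have hqc : Continuous q := hq.continuous
  have hq' : Continuous (deriv q) := hq.continuous_deriv le_rfl
  have hqd : ∀ z, HasDerivAt q (deriv q z) z := fun z =>
    (hq.differentiable one_ne_zero z).hasDerivAt
  set ρ := 48 * Real.exp (-(2 * s * L)) with hρ
  set D : ℝ → ℝ := fun z =>
    ((w2 L z * w L z - w1 L z * w1 L z) / w L z ^ 2) * q z ^ 2
      + (w1 L z / w L z) * (2 * q z * deriv q z) with hD
  have hψ : ∀ z, HasDerivAt (fun y => (w1 L y / w L y) * q y ^ 2) (D z) z := by
    intro z
    have h1 : HasDerivAt (fun y => w1 L y / w L y)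
        ((w2 L z * w L z - w1 L z * w1 L z) / w L z ^ 2) z :=
      (hasDerivAt_w1 L z).div (hasDerivAt_w L z) (w_ne L z)
    have h2 := (hqd z).pow 2
    have h3 := h1.mul h2
    refine h3.congr_deriv ?_; symm
    simp only [hD]
    push_cast
    simp only [Pi.pow_apply]
    ring
  have hDcont : Continuous D := by
    have hc1 : Continuous fun z => (w2 L z * w L z - w1 L z * w1 L z) / w L z ^ 2 :=
      (((continuous_w2 L).mul (continuous_w L)).sub
        ((continuous_w1 L).mul (continuous_w1 L))).div ((continuous_w L).pow 2)
        fun z => pow_ne_zero 2 (w_ne L z)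
    have hc2 : Continuous fun z => w1 L z / w L z :=
      (continuous_w1 L).div (continuous_w L) fun z => w_ne L z
    exact (hc1.mul (hqc.pow 2)).add (hc2.mul ((continuous_const.mul hqc).mul hq'))
  have hcont1 : Continuous fun z => (deriv q z) ^ 2 + V z * q z ^ 2 :=
    (hq'.pow 2).add (continuous_V.mul (hqc.pow 2))
  have hcont2 : Continuous fun z => (-ρ) * q z ^ 2 + D z :=
    (continuous_const.mul (hqc.pow 2)).add hDcont
  rw [icc_int L hL.le] at hnorm ⊢
  have hmono : (∫ z in (-L)..L, ((-ρ) * q z ^ 2 + D z))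
      ≤ ∫ z in (-L)..L, ((deriv q z) ^ 2 + V z * q z ^ 2) := by
    apply intervalIntegral.integral_mono_on hle (hcont2.intervalIntegrable _ _)
      (hcont1.intervalIntegrable _ _)
    intro z hz
    have hGb := G_bound L hL z hz
    rw [← hρ] at hGb
    have hwne := w_ne L z
    have key : (deriv q z) ^ 2 + V z * q z ^ 2 =
        (deriv q z - w1 L z / w L z * q z) ^ 2
          + ((V z - w2 L z / w L z) * q z ^ 2 + D z) := by
      rw [hD]
      field_simp
      ring
    have h5 : -ρ * q z ^ 2 ≤ (V z - w2 L z / w L z) * q z ^ 2 :=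
      mul_le_mul_of_nonneg_right hGb (sq_nonneg _)
    rw [key]
    have h6 := sq_nonneg (deriv q z - w1 L z / w L z * q z)
    linarith [h5, h6]
  have hFTC : (∫ z in (-L)..L, D z) = 0 := by
    rw [intervalIntegral.integral_eq_sub_of_hasDerivAt (fun z _ => hψ z)
      (hDcont.intervalIntegrable _ _)]
    rw [w1_L, w1_negL]
    simp
  have hsplit : (∫ z in (-L)..L, ((-ρ) * q z ^ 2 + D z)) = -ρ := by
    rw [intervalIntegral.integral_add (f := fun z => (-ρ) * q z ^ 2) (g := D)
      ((continuous_const.mul (hqc.pow 2)).intervalIntegrable _ _)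
      (hDcont.intervalIntegrable _ _), hFTC,
      intervalIntegral.integral_const_mul, hnorm]
    ring
  rw [hsplit] at hmono
  exact hmono

lemma contDiff_p : ContDiff ℝ 1 p := by
  have hch : ContDiff ℝ 1 ch :=
    Real.contDiff_cosh.comp (contDiff_const.mul contDiff_id)
  exact contDiff_const.div (hch.pow 2) fun z => pow_ne_zero 2 (ch_ne z)

lemma exists_test (L : ℝ) (hL : 0 < L) :
    ∃ q : ℝ → ℝ, ContDiff ℝ 1 q ∧ (∫ z in Icc (-L) L, q z ^ 2) = 1 ∧
      (∫ z in Icc (-L) L, ((deriv q z) ^ 2 + V z * q z ^ 2)) ≤ 0 := by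
  have hle : -L ≤ L := by linarith
  set I := ∫ z in (-L)..L, p z ^ 2 with hI
  have hIpos : 0 < I := by
    apply intervalIntegral.intervalIntegral_pos_of_pos_on
      ((continuous_p.pow 2).intervalIntegrable _ _)
      (fun x _ => pow_pos (p_pos x) 2) (by linarith)
  set N := Real.sqrt I with hN
  have hNpos : 0 < N := Real.sqrt_pos.mpr hIpos
  have hN2 : N ^ 2 = I := Real.sq_sqrt hIpos.le
  refine ⟨fun z => p z / N, contDiff_p.div_const N, ?_, ?_⟩
  · rw [icc_int L hL.le]
    calc (∫ z in (-L)..L, (p z / N) ^ 2) = ∫ z in (-L)..L, p z ^ 2 / N ^ 2 := by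
          simp [div_pow]
      _ = I / N ^ 2 := by rw [intervalIntegral.integral_div]
      _ = 1 := by rw [hN2]; field_simp
  · rw [icc_int L hL.le]
    have hderiv : ∀ z, deriv (fun y => p y / N) z = p' z / N := fun z =>
      ((hasDerivAt_p z).div_const N).deriv
    have heq : ∀ z : ℝ, (deriv (fun y => p y / N) z) ^ 2 + V z * (p z / N) ^ 2
        = (p' z * p' z + p z * p'' z) / N ^ 2 := by
      intro z
      rw [hderiv z, p''_eq z]
      field_simp
    rw [intervalIntegral.integral_congr (g := fun z => (p' z * p' z + p z * p'' z) / N ^ 2)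
      (fun z _ => heq z)]
    rw [intervalIntegral.integral_div]
    have hFTC : (∫ z in (-L)..L, (p' z * p' z + p z * p'' z))
        = p L * p' L - p (-L) * p' (-L) := by
      have hF : ∀ z ∈ uIcc (-L) L,
          HasDerivAt (fun y => p y * p' y) (p' z * p' z + p z * p'' z) z := by
        intro z _
        exact (hasDerivAt_p z).mul (hasDerivAt_p' z)
      exact intervalIntegral.integral_eq_sub_of_hasDerivAt hF
        (((continuous_p'.mul continuous_p').add
          (continuous_p.mul continuous_p'')).intervalIntegrable _ _)
    rw [hFTC]
    apply div_nonpos_of_nonpos_of_nonneg _ (by positivity)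
    have hshL : 0 ≤ sh L := by
      unfold sh
      exact Real.sinh_nonneg_iff.mpr (mul_nonneg s_pos.le hL.le)
    have hchL3 : 0 < ch L ^ 3 := pow_pos (ch_pos L) 3
    have h1 : p' L ≤ 0 := by
      unfold p'
      apply div_nonpos_of_nonpos_of_nonneg _ hchL3.le
      nlinarith [s_pos]
    have h2 : 0 ≤ p' (-L) := by
      unfold p'
      have hsh : sh (-L) = - sh L := by
        unfold sh; rw [show s * -L = -(s * L) by ring, Real.sinh_neg]
      have hch : ch (-L) = ch L := by
        unfold ch; rw [show s * -L = -(s * L) by ring, Real.cosh_neg]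
      rw [hsh, hch]
      apply div_nonneg _ hchL3.le
      nlinarith [s_pos]
    nlinarith [p_pos L, p_pos (-L)]

lemma lambda1_le (ε : ℝ) (hε : 0 < ε) : lambda1 ε ≤ 0 := by
  have hL : (0:ℝ) < 1 / ε := by positivity
  obtain ⟨q, hq1, hq2, hq3⟩ := exists_test (1 / ε) hL
  have hmem : (∫ z in Icc (-(1 / ε)) (1 / ε),
      ((deriv q z) ^ 2 + (12 * (Real.tanh (Real.sqrt 2 * z)) ^ 2 - 4) * (q z) ^ 2)) ∈
      {R : ℝ | ∃ q : ℝ → ℝ, ContDiff ℝ 1 q ∧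
        (∫ z in Icc (-(1 / ε)) (1 / ε), (q z) ^ 2) = 1 ∧
        R = ∫ z in Icc (-(1 / ε)) (1 / ε),
          ((deriv q z) ^ 2 + (12 * (Real.tanh (Real.sqrt 2 * z)) ^ 2 - 4) * (q z) ^ 2)} :=
    ⟨q, hq1, hq2, rfl⟩
  have hbdd : BddBelow {R : ℝ | ∃ q : ℝ → ℝ, ContDiff ℝ 1 q ∧
      (∫ z in Icc (-(1 / ε)) (1 / ε), (q z) ^ 2) = 1 ∧
      R = ∫ z in Icc (-(1 / ε)) (1 / ε),
        ((deriv q z) ^ 2 + (12 * (Real.tanh (Real.sqrt 2 * z)) ^ 2 - 4) * (q z) ^ 2)} := by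
    refine ⟨-(48 * Real.exp (-(2 * s * (1 / ε)))), ?_⟩
    rintro R ⟨q', hq1', hq2', rfl⟩
    exact integral_lower (1 / ε) hL q' hq1' hq2'
  calc lambda1 ε ≤ _ := csInf_le hbdd hmem
    _ ≤ 0 := hq3

lemma lambda1_ge (ε : ℝ) (hε : 0 < ε) :
    -(48 * Real.exp (-(2 * s * (1 / ε)))) ≤ lambda1 ε := by
  have hL : (0:ℝ) < 1 / ε := by positivity
  apply le_csInf
  · obtain ⟨q, hq1, hq2, _⟩ := exists_test (1 / ε) hL
    exact ⟨_, q, hq1, hq2, rfl⟩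
  · rintro R ⟨q', hq1', hq2', rfl⟩
    exact integral_lower (1 / ε) hL q' hq1' hq2'

end Stmt18Aux
end

open Stmt18Aux

theorem stmt_18 :
    ∃ c > (0 : ℝ), ∃ C > (0 : ℝ), ∃ ε₀ > (0 : ℝ),
      (∀ ε : ℝ, 0 < ε → ε < ε₀ → lambda1 ε ≤ C * Real.exp (-c / ε)) ∧
      Tendsto lambda1 (nhdsWithin 0 (Ioi 0)) (nhds 0) := by
  refine ⟨1, one_pos, 1, one_pos, 1, one_pos, ?_, ?_⟩
  · intro ε hε _
    have h1 := lambda1_le ε hε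
    have h2 := (Real.exp_pos (-1 / ε)).le
    rw [one_mul]
    linarith
  · have hlower : ∀ᶠ ε in nhdsWithin (0:ℝ) (Ioi 0),
        -(48 * Real.exp (-(2 * s * (1 / ε)))) ≤ lambda1 ε := by
      filter_upwards [self_mem_nhdsWithin] with ε hε
      exact lambda1_ge ε hε
    have hupper : ∀ᶠ ε in nhdsWithin (0:ℝ) (Ioi 0), lambda1 ε ≤ 0 := by
      filter_upwards [self_mem_nhdsWithin] with ε hε
      exact lambda1_le ε hε
    have htend : Tendsto (fun ε : ℝ => -(48 * Real.exp (-(2 * s * (1 / ε)))))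
        (nhdsWithin (0:ℝ) (Ioi 0)) (nhds 0) := by
      have h1 : Tendsto (fun ε : ℝ => 2 * s * (1 / ε)) (nhdsWithin (0:ℝ) (Ioi 0)) atTop := by
        apply Tendsto.const_mul_atTop (by have := s_pos; positivity : (0:ℝ) < 2 * s)
        have h0 : Tendsto (fun ε : ℝ => ε⁻¹) (nhdsWithin 0 (Ioi 0)) atTop :=
          tendsto_inv_nhdsGT_zero
        exact h0.congr fun x => (one_div x).symm
      have h2 : Tendsto (fun x : ℝ => -(48 * Real.exp (-x))) atTop (nhds (-(48 * 0))) :=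
        ((Real.tendsto_exp_neg_atTop_nhds_zero.const_mul 48)).neg
      have h3 := h2.comp h1
      have hz : (-(48 * (0:ℝ))) = 0 := by norm_num
      rw [hz] at h3
      exact h3.congr fun ε => rfl
    exact tendsto_of_tendsto_of_tendsto_of_le_of_le' htend tendsto_const_nhds hlower hupper
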